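/- Cone types: let Σ be the selfsimilarity complex of a contracting selfsimilar group G with generating set S closed under restriction, and let H be the maximal length of horizontal geodesics. If v_1, v_2 are vertices and φ: Σ(B_hor(v_1,H)) → Σ(B_hor(v_2,H)) is a label-preserving graph isomorphism with φ(v_1)=v_2, then the map C_{v_1} → C_{v_2}, w v_1 ↦ w v_2 (w ∈ X*), is an isometry for the metric of Σ. -/

import Mathlib

/-- A selfsimilar action of a group `G` on the set of finite words over `X`:
`(uv)^g = u^g v^{g|_u}` where `g|_u` is the restriction of `g` to `u`. -/
structure SelfSimilarAction (G : Type*) [Group G] (X : Type*) where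
  act : List X → G → List X
  res : G → List X → G
  act_one : ∀ v, act v 1 = v
  act_mul : ∀ v g h, act v (g * h) = act (act v g) h
  act_length : ∀ v g, (act v g).length = v.length
  act_append : ∀ (v w : List X) (g : G), act (v ++ w) g = act v g ++ act w (res g v)
  res_mul : ∀ (g h : G) (v : List X), res (g * h) v = res g v * res h (act v g)
  res_one : ∀ v, res 1 v = 1

/-- The data of a selfsimilarity complex: a selfsimilar action together with a
symmetric generating set `S` closed under restriction. -/
structure SSComplex (G : Type*) [Group G] (X : Type*) extends SelfSimilarAction G X where
  S : Set G
  S_symm : ∀ s ∈ S, s⁻¹ ∈ S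
  S_res : ∀ s ∈ S, ∀ v : List X, res s v ∈ S

variable {G : Type*} [Group G] {X : Type*}

/-- The selfsimilarity complex: vertices are words, vertical edges join `v` and `xv`,
and horizontal edges join `u` and `u^s` for generators `s ∈ S`. -/
def SSComplex.graph (C : SSComplex G X) : SimpleGraph (List X) where
  Adj u v := u ≠ v ∧
    ((∃ s ∈ C.S, C.act u s = v) ∨ (∃ x : X, u = x :: v) ∨ (∃ x : X, v = x :: u))
  symm := by
    constructor
    rintro u v ⟨hne, h⟩
    refine ⟨fun h' => hne h'.symm, ?_⟩
    rcases h with ⟨s, hs, hact⟩ | ⟨x, hx⟩ | ⟨x, hx⟩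
    · refine Or.inl ⟨s⁻¹, C.S_symm s hs, ?_⟩
      rw [← hact, ← C.act_mul, mul_inv_cancel, C.act_one]
    · exact Or.inr (Or.inr ⟨x, hx⟩)
    · exact Or.inr (Or.inl ⟨x, hx⟩)
  loopless := ⟨fun u h => h.1 rfl⟩

/-- The horizontal subgraph of the selfsimilarity complex. -/
def SSComplex.hgraph (C : SSComplex G X) : SimpleGraph (List X) where
  Adj u v := u ≠ v ∧ ∃ s ∈ C.S, C.act u s = v
  symm := by
    constructor
    rintro u v ⟨hne, s, hs, hact⟩
    refine ⟨fun h' => hne h'.symm, s⁻¹, C.S_symm s hs, ?_⟩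
    rw [← hact, ← C.act_mul, mul_inv_cancel, C.act_one]
  loopless := ⟨fun u h => h.1 rfl⟩

/-- The horizontal ball `B_hor(v, r)`: vertices at the same level as `v` within
distance `r` of `v` in the selfsimilarity complex. -/
def SSComplex.bhor (C : SSComplex G X) (v : List X) (r : ℕ) : Set (List X) :=
  {w | w.length = v.length ∧ C.graph.dist v w ≤ r}

/-- The cone over a word `v`: the set of words ending in `v`. -/
def Cone {X : Type*} (v : List X) : Set (List X) := {u | ∃ w : List X, u = w ++ v}

/-- Every dart of the walk is a downward vertical step (deleting the first letter). -/
def WalkDown (C : SSComplex G X) {u v : List X} (p : C.graph.Walk u v) : Prop :=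
  ∀ d ∈ p.darts, ∃ x : X, d.toProd.1 = x :: d.toProd.2

/-- Every dart of the walk is an upward vertical step (prepending a letter). -/
def WalkUp (C : SSComplex G X) {u v : List X} (p : C.graph.Walk u v) : Prop :=
  ∀ d ∈ p.darts, ∃ x : X, d.toProd.2 = x :: d.toProd.1

/-- Every dart of the walk is a horizontal step, given by a generator in `S`. -/
def WalkHoriz (C : SSComplex G X) {u v : List X} (p : C.graph.Walk u v) : Prop :=
  ∀ d ∈ p.darts, ∃ s ∈ C.S, C.act d.toProd.1 s = d.toProd.2

/-- A walk is in normal form (with horizontal part of length at most `H`) if it is the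
concatenation of a descending vertical segment, a horizontal segment of length at most
`H`, and an ascending vertical segment. -/
def IsNormalForm (C : SSComplex G X) (H : ℕ) {u v : List X}
    (p : C.graph.Walk u v) : Prop :=
  ∃ (a b : List X) (p₁ : C.graph.Walk u a) (p₂ : C.graph.Walk a b) (p₃ : C.graph.Walk b v),
    p = p₁.append (p₂.append p₃) ∧ WalkDown C p₁ ∧ WalkHoriz C p₂ ∧ WalkUp C p₃ ∧
      p₂.length ≤ H


section Aux

lemma SSComplex.adj_cons (C : SSComplex G X) (x : X) (u : List X) :
    C.graph.Adj (x :: u) u := by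
  refine ⟨fun h => ?_, Or.inr (Or.inl ⟨x, rfl⟩)⟩
  have := congrArg List.length h
  simp at this

lemma SSComplex.reach_nil (C : SSComplex G X) (u : List X) : C.graph.Reachable u [] := by
  induction u with
  | nil => exact SimpleGraph.Reachable.refl _
  | cons x u ih => exact (C.adj_cons x u).reachable.trans ih

lemma SSComplex.reach (C : SSComplex G X) (u v : List X) : C.graph.Reachable u v :=
  (C.reach_nil u).trans (C.reach_nil v).symm

lemma SSComplex.dist_tri (C : SSComplex G X) (u v w : List X) :
    C.graph.dist u w ≤ C.graph.dist u v + C.graph.dist v w := by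
  obtain ⟨p, hp⟩ := (C.reach u v).exists_walk_length_eq_dist
  obtain ⟨q, hq⟩ := (C.reach v w).exists_walk_length_eq_dist
  calc C.graph.dist u w ≤ (p.append q).length := SimpleGraph.dist_le _
    _ = _ := by rw [SimpleGraph.Walk.length_append, hp, hq]

lemma SSComplex.dist_down (C : SSComplex G X) (c u : List X) :
    C.graph.dist (c ++ u) u ≤ c.length := by
  induction c with
  | nil => rw [List.nil_append, SimpleGraph.dist_self]; exact Nat.zero_le _
  | cons x c ih =>
    have h1 : C.graph.dist (x :: (c ++ u)) (c ++ u) ≤ 1 := by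
      simpa using SimpleGraph.dist_le (C.adj_cons x (c ++ u)).toWalk
    have h2 := C.dist_tri ((x :: c) ++ u) (c ++ u) u
    simp only [List.cons_append] at h2 ⊢
    simp only [List.length_cons]
    omega

lemma SSComplex.dist_act_le_one (C : SSComplex G X) (u : List X) {s : G} (hs : s ∈ C.S) :
    C.graph.dist u (C.act u s) ≤ 1 := by
  by_cases h : C.act u s = u
  · rw [h, SimpleGraph.dist_self]; exact Nat.zero_le _
  · have hadj : C.graph.Adj u (C.act u s) := ⟨fun he => h he.symm, Or.inl ⟨s, hs, rfl⟩⟩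
    simpa using SimpleGraph.dist_le hadj.toWalk

lemma SSComplex.walkDown_decomp (C : SSComplex G X) {u a : List X} (p : C.graph.Walk u a) :
    WalkDown C p → ∃ c : List X, u = c ++ a ∧ p.length = c.length := by
  induction p with
  | nil => exact fun _ => ⟨[], rfl, rfl⟩
  | @cons u u₂ a h p ih =>
    intro hp
    obtain ⟨x, hx⟩ := hp ⟨(u, u₂), h⟩ (by simp)
    obtain ⟨c, hc, hl⟩ := ih (fun d hd => hp d (by simp [hd]))
    refine ⟨x :: c, ?_, by simp [hl]⟩
    simp only at hx
    rw [hx, hc]; rfl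

lemma SSComplex.walkUp_decomp (C : SSComplex G X) {b v : List X} (p : C.graph.Walk b v) :
    WalkUp C p → ∃ c : List X, v = c ++ b ∧ p.length = c.length := by
  induction p with
  | nil => exact fun _ => ⟨[], rfl, rfl⟩
  | @cons b b₂ v h p ih =>
    intro hp
    obtain ⟨x, hx⟩ := hp ⟨(b, b₂), h⟩ (by simp)
    obtain ⟨c, hc, hl⟩ := ih (fun d hd => hp d (by simp [hd]))
    refine ⟨c ++ [x], ?_, by simp [hl]⟩
    simp only at hx
    rw [hc, hx]
    simp

lemma SSComplex.walkHoriz_decomp (C : SSComplex G X) {a b : List X} (p : C.graph.Walk a b) :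
    WalkHoriz C p → ∃ L : List G, (∀ s ∈ L, s ∈ C.S) ∧ L.length = p.length ∧
      L.foldl C.act a = b := by
  induction p with
  | nil => exact fun _ => ⟨[], by simp, rfl, rfl⟩
  | @cons a a₂ b h p ih =>
    intro hp
    obtain ⟨s, hs, hact⟩ := hp ⟨(a, a₂), h⟩ (by simp)
    obtain ⟨L, hL, hLl, hLf⟩ := ih (fun d hd => hp d (by simp [hd]))
    refine ⟨s :: L, ?_, by simp [hLl], ?_⟩
    · intro t ht
      rcases List.mem_cons.mp ht with rfl | ht
      · exact hs
      · exact hL t ht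
    · simp only at hact
      rw [List.foldl_cons, hact]
      exact hLf

lemma SSComplex.foldl_act_length (C : SSComplex G X) :
    ∀ (L : List G) (a : List X), (L.foldl C.act a).length = a.length
  | [], _ => rfl
  | s :: L, a => by
    rw [List.foldl_cons, SSComplex.foldl_act_length C L, C.act_length]

/-- Fold a list of generators over a split word `wa ++ t`, tracking the two halves. -/
def SSComplex.foldPair (C : SSComplex G X) : List G → List X → List X → List X × List X
  | [], wa, t => (wa, t)
  | s :: L, wa, t => SSComplex.foldPair C L (C.act wa s) (C.act t (C.res s wa))

lemma SSComplex.foldPair_cons (C : SSComplex G X) (s : G) (L : List G) (wa t : List X) :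
    C.foldPair (s :: L) wa t = C.foldPair L (C.act wa s) (C.act t (C.res s wa)) := rfl

lemma SSComplex.foldPair_spec (C : SSComplex G X) : ∀ (L : List G) (wa t : List X),
    L.foldl C.act (wa ++ t) = (C.foldPair L wa t).1 ++ (C.foldPair L wa t).2
  | [], _, _ => rfl
  | s :: L, wa, t => by
    rw [List.foldl_cons, C.act_append, C.foldPair_cons]
    exact SSComplex.foldPair_spec C L _ _

lemma SSComplex.foldPair_fst_length (C : SSComplex G X) : ∀ (L : List G) (wa t : List X),
    (C.foldPair L wa t).1.length = wa.length
  | [], _, _ => rfl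
  | s :: L, wa, t => by
    rw [C.foldPair_cons, SSComplex.foldPair_fst_length C L, C.act_length]

lemma SSComplex.foldPair_snd_length (C : SSComplex G X) : ∀ (L : List G) (wa t : List X),
    (C.foldPair L wa t).2.length = t.length
  | [], _, _ => rfl
  | s :: L, wa, t => by
    rw [C.foldPair_cons, SSComplex.foldPair_snd_length C L, C.act_length]

lemma SSComplex.trans_lemma (C : SSComplex G X) (H : ℕ) (v₁ : List X) (φ : List X → List X)
    (hlab : ∀ u ∈ C.bhor v₁ H, ∀ w ∈ C.bhor v₁ H, ∀ s ∈ C.S,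
      (C.act u s = w ↔ C.act (φ u) s = φ w)) :
    ∀ (L : List G), (∀ s ∈ L, s ∈ C.S) → ∀ (wa t : List X),
      t.length = v₁.length → C.graph.dist v₁ t + L.length ≤ H →
      C.graph.dist (wa ++ φ t) ((C.foldPair L wa t).1 ++ φ (C.foldPair L wa t).2)
        ≤ L.length := by
  intro L
  induction L with
  | nil =>
    intro _ wa t _ _
    show C.graph.dist (wa ++ φ t) (wa ++ φ t) ≤ 0
    rw [SimpleGraph.dist_self]
  | cons s L ih =>
    intro hS wa t htl hd
    rw [C.foldPair_cons]
    have hs : s ∈ C.S := hS s List.mem_cons_self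
    have hrS : C.res s wa ∈ C.S := C.S_res s hs wa
    have ht₂l : (C.act t (C.res s wa)).length = v₁.length := by rw [C.act_length, htl]
    have hda : C.graph.dist t (C.act t (C.res s wa)) ≤ 1 := C.dist_act_le_one t hrS
    have htri := C.dist_tri v₁ t (C.act t (C.res s wa))
    simp only [List.length_cons] at hd
    have htB : t ∈ C.bhor v₁ H := ⟨htl, by omega⟩
    have ht₂B : C.act t (C.res s wa) ∈ C.bhor v₁ H := ⟨ht₂l, by omega⟩
    have hstep : C.act (φ t) (C.res s wa) = φ (C.act t (C.res s wa)) :=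
      (hlab t htB _ ht₂B _ hrS).mp rfl
    have hone : C.graph.dist (wa ++ φ t) (C.act wa s ++ φ (C.act t (C.res s wa))) ≤ 1 := by
      by_cases he : wa ++ φ t = C.act wa s ++ φ (C.act t (C.res s wa))
      · rw [he, SimpleGraph.dist_self]; exact Nat.zero_le _
      · have hact : C.act (wa ++ φ t) s = C.act wa s ++ φ (C.act t (C.res s wa)) := by
          rw [C.act_append, hstep]
        have hadj : C.graph.Adj (wa ++ φ t) (C.act wa s ++ φ (C.act t (C.res s wa))) :=
          ⟨he, Or.inl ⟨s, hs, hact⟩⟩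
        simpa using SimpleGraph.dist_le hadj.toWalk
    have ihres := ih (fun x hx => hS x (List.mem_cons_of_mem _ hx)) (C.act wa s)
      (C.act t (C.res s wa)) ht₂l (by omega)
    have htri2 := C.dist_tri (wa ++ φ t) (C.act wa s ++ φ (C.act t (C.res s wa)))
      ((C.foldPair L (C.act wa s) (C.act t (C.res s wa))).1 ++
        φ (C.foldPair L (C.act wa s) (C.act t (C.res s wa))).2)
    simp only [List.length_cons]
    omega

lemma SSComplex.side_lemma (C : SSComplex G X) (H : ℕ)
    (hNF : ∀ u v : List X,
      ∃ p : C.graph.Walk u v, p.length = C.graph.dist u v ∧ IsNormalForm C H p)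
    (v₁ v₂ : List X) (φ : List X → List X)
    (hlab : ∀ u ∈ C.bhor v₁ H, ∀ w ∈ C.bhor v₁ H, ∀ s ∈ C.S,
      (C.act u s = w ↔ C.act (φ u) s = φ w))
    (hφv : φ v₁ = v₂) (w w' : List X) :
    C.graph.dist (w ++ v₂) (w' ++ v₂) ≤ C.graph.dist (w ++ v₁) (w' ++ v₁) := by
  obtain ⟨p, hplen, a, b, p₁, p₂, p₃, hpeq, hdown, hhoriz, hup, hH⟩ := hNF (w ++ v₁) (w' ++ v₁)
  obtain ⟨c, hc, hcl⟩ := C.walkDown_decomp p₁ hdown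
  obtain ⟨c', hc', hc'l⟩ := C.walkUp_decomp p₃ hup
  obtain ⟨L, hLS, hLl, hLf⟩ := C.walkHoriz_decomp p₂ hhoriz
  have hptot : c.length + L.length + c'.length = C.graph.dist (w ++ v₁) (w' ++ v₁) := by
    rw [← hplen, hpeq]
    simp only [SimpleGraph.Walk.length_append]
    omega
  have hcLen := congrArg List.length hc
  have hc'Len := congrArg List.length hc'
  simp only [List.length_append] at hcLen hc'Len
  have hbLen : b.length = a.length := by rw [← hLf, C.foldl_act_length]
  by_cases hcase : v₁.length ≤ a.length
  · -- the horizontal part stays above the level of v₁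
    have hclw : c.length ≤ w.length := by omega
    have ha : a = w.drop c.length ++ v₁ := by
      have h2 : a = (w ++ v₁).drop c.length := by rw [hc, List.drop_left]
      rw [h2, List.drop_append, Nat.sub_eq_zero_of_le hclw, List.drop_zero]
    have hw : w = c ++ w.drop c.length := by
      have h3 : w ++ v₁ = (c ++ w.drop c.length) ++ v₁ := by
        rw [hc, ha, List.append_assoc]
      exact (List.append_inj' h3 rfl).1
    have hfold : b = (C.foldPair L (w.drop c.length) v₁).1 ++
        (C.foldPair L (w.drop c.length) v₁).2 := by
      rw [← hLf, ha, C.foldPair_spec]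
    have hsnd := C.foldPair_snd_length L (w.drop c.length) v₁
    have hfst := C.foldPair_fst_length L (w.drop c.length) v₁
    have hbLen2 := congrArg List.length hfold
    simp only [List.length_append, hsnd, hfst] at hbLen2
    have hc'lw : c'.length ≤ w'.length := by omega
    have hb : b = w'.drop c'.length ++ v₁ := by
      have h2 : b = (w' ++ v₁).drop c'.length := by rw [hc', List.drop_left]
      rw [h2, List.drop_append, Nat.sub_eq_zero_of_le hc'lw, List.drop_zero]
    have hw' : w' = c' ++ w'.drop c'.length := by
      have h3 : w' ++ v₁ = (c' ++ w'.drop c'.length) ++ v₁ := by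
        rw [hc', hb, List.append_assoc]
      exact (List.append_inj' h3 rfl).1
    have hPeq : (C.foldPair L (w.drop c.length) v₁).1 = w'.drop c'.length ∧
        (C.foldPair L (w.drop c.length) v₁).2 = v₁ :=
      List.append_inj' (hfold.symm.trans hb) (by rw [hsnd])
    have d1 : C.graph.dist (w ++ v₂) (w.drop c.length ++ v₂) ≤ c.length := by
      have h4 : w ++ v₂ = c ++ (w.drop c.length ++ v₂) := by
        rw [← List.append_assoc, ← hw]
      rw [h4]
      exact C.dist_down c _
    have d2 : C.graph.dist (w.drop c.length ++ v₂) (w'.drop c'.length ++ v₂) ≤ L.length := by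
      have h5 := C.trans_lemma H v₁ φ hlab L hLS (w.drop c.length) v₁ rfl
        (by rw [SimpleGraph.dist_self]; omega)
      rwa [hPeq.1, hPeq.2, hφv] at h5
    have d3 : C.graph.dist (w'.drop c'.length ++ v₂) (w' ++ v₂) ≤ c'.length := by
      have h4 : w' ++ v₂ = c' ++ (w'.drop c'.length ++ v₂) := by
        rw [← List.append_assoc, ← hw']
      rw [h4, SimpleGraph.dist_comm]
      exact C.dist_down c' _
    have htri1 := C.dist_tri (w ++ v₂) (w.drop c.length ++ v₂) (w' ++ v₂)
    have htri2 := C.dist_tri (w.drop c.length ++ v₂) (w'.drop c'.length ++ v₂) (w' ++ v₂)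
    omega
  · -- the geodesic descends below the level of v₁
    have d1 : C.graph.dist (w ++ v₂) v₂ ≤ w.length := C.dist_down w v₂
    have d2 : C.graph.dist v₂ (w' ++ v₂) ≤ w'.length := by
      rw [SimpleGraph.dist_comm]
      exact C.dist_down w' v₂
    have htri := C.dist_tri (w ++ v₂) v₂ (w' ++ v₂)
    omega

end Aux

/-- Cone types: in the selfsimilarity complex of a contracting selfsimilar group with
generating set `S` closed under restriction, with every pair of vertices joined by a
normal form geodesic whose horizontal part has length at most `H`, if `φ` is a
label-preserving isomorphism between the induced subcomplexes on the horizontal balls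
`B_hor(v₁, H)` and `B_hor(v₂, H)` with `φ(v₁) = v₂`, then the map
`C_{v₁} → C_{v₂}, w v₁ ↦ w v₂` is an isometry for the metric of `Σ`. -/
theorem stmt17 (C : SSComplex G X) (H : ℕ)
    (hNF : ∀ u v : List X,
      ∃ p : C.graph.Walk u v, p.length = C.graph.dist u v ∧ IsNormalForm C H p)
    (v₁ v₂ : List X) (φ : List X → List X)
    (hbij : Set.BijOn φ (C.bhor v₁ H) (C.bhor v₂ H))
    (hlab : ∀ u ∈ C.bhor v₁ H, ∀ w ∈ C.bhor v₁ H, ∀ s ∈ C.S,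
      (C.act u s = w ↔ C.act (φ u) s = φ w))
    (hφv : φ v₁ = v₂) :
    ∀ w w' : List X,
      C.graph.dist (w ++ v₁) (w' ++ v₁) = C.graph.dist (w ++ v₂) (w' ++ v₂) := by
  classical
  have hv₁B : v₁ ∈ C.bhor v₁ H := ⟨rfl, by rw [SimpleGraph.dist_self]; exact Nat.zero_le _⟩
  set ψ := Function.invFunOn φ (C.bhor v₁ H) with hψ
  have hinv : Set.InvOn ψ φ (C.bhor v₁ H) (C.bhor v₂ H) := hbij.invOn_invFunOn
  have hbij' : Set.BijOn ψ (C.bhor v₂ H) (C.bhor v₁ H) := hbij.symm hinv.symm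
  have hψv : ψ v₂ = v₁ := by rw [← hφv]; exact hinv.1 hv₁B
  have hlab' : ∀ u ∈ C.bhor v₂ H, ∀ z ∈ C.bhor v₂ H, ∀ s ∈ C.S,
      (C.act u s = z ↔ C.act (ψ u) s = ψ z) := by
    intro u hu z hz s hs
    have hu1 : ψ u ∈ C.bhor v₁ H := hbij'.mapsTo hu
    have hz1 : ψ z ∈ C.bhor v₁ H := hbij'.mapsTo hz
    have := hlab (ψ u) hu1 (ψ z) hz1 s hs
    rw [hinv.2 hu, hinv.2 hz] at this
    exact this.symm
  intro w w'
  exact le_antisymm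
    (C.side_lemma H hNF v₂ v₁ ψ hlab' hψv w w')
    (C.side_lemma H hNF v₁ v₂ φ hlab hφv w w')
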